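/- Doubling-variable estimates with shifted penalization: Let n ≥ 1, T > 0, and write Q := ℝⁿ × [0,T). Let u : ℝⁿ × [0,T) → ℝ be upper semicontinuous and bounded, and let v : ℝⁿ × [0,T) → ℝ be continuous and bounded. Suppose there exist R > 0 and constants a ≤ b such that u ≡ a and v ≡ b on (ℝⁿ \ B_R(0)) × [0,T), and that u(·,0) ≤ v(·,0) on ℝⁿ. Fix μ > 0 such that m₀ := sup_{(x,t) ∈ Q} [u(x,t) − v(x,t) − μ/(T−t)] > 0. For ζ ∈ ℝⁿ and ε > 0 define Ψ_{ζ,ε}(x,t,y,s) := u(x,t) − v(y,s) − |x−y−ζ|²/(2ε) − |t−s|²/(2ε) − μ/(T−t). Suppose that for each sufficiently small ε > 0 a vector ζ_ε with |ζ_ε| ≤ √(m₀ ε) and a global maximum point (x_ε, t_ε, y_ε, s_ε) of Ψ_{ζ_ε,ε} on Q × Q are given. Then there is a constant M, independent of ε, such that |x_ε − y_ε − ζ_ε| ≤ √(Mε) and |t_ε − s_ε| ≤ √(Mε) for all such ε; moreover |x_ε − y_ε − ζ_ε|²/ε → 0 as ε → 0+. -/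

import Mathlib

open Set Filter Topology

noncomputable section

namespace Paper

abbrev E (n : ℕ) := EuclideanSpace ℝ (Fin n)

/-- Proposition 3.2 of the paper: doubling-variable estimates with
shifted penalization.  `Ψ_{ζ,ε}(x,t,y,s) = u(x,t) - v(y,s) - |x-y-ζ|²/(2ε) - |t-s|²/(2ε)
- μ/(T-t)`; `(X ε, tt ε, Y ε, ss ε)` is a given global maximum point of `Ψ_{ζ ε, ε}`
over `Q × Q`, for each `ε ∈ (0, ε₀)`. -/
theorem doubling_variable_estimates
    {n : ℕ} (hn : 1 ≤ n) (T : ℝ) (hT : 0 < T)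
    (u v : E n → ℝ → ℝ)
    (hu_usc : UpperSemicontinuousOn (fun q : E n × ℝ => u q.1 q.2) (univ ×ˢ Ico 0 T))
    (hu_bdd : ∃ C, ∀ x : E n, ∀ t ∈ Ico (0:ℝ) T, |u x t| ≤ C)
    (hv_cont : ContinuousOn (fun q : E n × ℝ => v q.1 q.2) (univ ×ˢ Ico 0 T))
    (hv_bdd : ∃ C, ∀ x : E n, ∀ t ∈ Ico (0:ℝ) T, |v x t| ≤ C)
    (R : ℝ) (hR : 0 < R) (a b : ℝ) (hab : a ≤ b)
    (hua : ∀ x : E n, ∀ t ∈ Ico (0:ℝ) T, R ≤ ‖x‖ → u x t = a)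
    (hvb : ∀ x : E n, ∀ t ∈ Ico (0:ℝ) T, R ≤ ‖x‖ → v x t = b)
    (hinit : ∀ x, u x 0 ≤ v x 0)
    (μ : ℝ) (hμ : 0 < μ)
    (m₀ : ℝ)
    (hm₀ : m₀ = sSup {r : ℝ | ∃ x : E n, ∃ t ∈ Ico (0:ℝ) T,
      r = u x t - v x t - μ / (T - t)})
    (hm₀pos : 0 < m₀)
    (ε₀ : ℝ) (hε₀ : 0 < ε₀)
    (ζ : ℝ → E n) (X Y : ℝ → E n) (tt ss : ℝ → ℝ)
    (hζ : ∀ ε ∈ Ioo (0:ℝ) ε₀, ‖ζ ε‖ ≤ Real.sqrt (m₀ * ε))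
    (hmem : ∀ ε ∈ Ioo (0:ℝ) ε₀, tt ε ∈ Ico (0:ℝ) T ∧ ss ε ∈ Ico (0:ℝ) T)
    (hmax : ∀ ε ∈ Ioo (0:ℝ) ε₀, ∀ x y : E n, ∀ t ∈ Ico (0:ℝ) T, ∀ s ∈ Ico (0:ℝ) T,
      u x t - v y s - ‖x - y - ζ ε‖ ^ 2 / (2 * ε) - |t - s| ^ 2 / (2 * ε) - μ / (T - t) ≤
        u (X ε) (tt ε) - v (Y ε) (ss ε) - ‖X ε - Y ε - ζ ε‖ ^ 2 / (2 * ε)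
          - |tt ε - ss ε| ^ 2 / (2 * ε) - μ / (T - tt ε)) :
    (∃ M : ℝ, ∀ ε ∈ Ioo (0:ℝ) ε₀,
        ‖X ε - Y ε - ζ ε‖ ≤ Real.sqrt (M * ε) ∧ |tt ε - ss ε| ≤ Real.sqrt (M * ε)) ∧
      Tendsto (fun ε => ‖X ε - Y ε - ζ ε‖ ^ 2 / ε) (𝓝[>] 0) (𝓝 0) := by
  obtain ⟨Cu, hCu⟩ := hu_bdd
  obtain ⟨Cv, hCv⟩ := hv_bdd
  -- a point of norm R
  set x0 : E n := R • EuclideanSpace.single (⟨0, hn⟩ : Fin n) (1:ℝ) with hx0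
  have hx0R : ‖x0‖ = R := by
    rw [hx0, norm_smul, EuclideanSpace.norm_single]
    simp [abs_of_pos hR]
  have h0T : (0:ℝ) ∈ Ico (0:ℝ) T := ⟨le_refl _, hT⟩
  set L : ℝ := a - b - m₀/2 - μ/T with hL
  clear_value L
  -- key lower bound on the max value
  have hKey : ∀ ε ∈ Ioo (0:ℝ) ε₀,
      L ≤ u (X ε) (tt ε) - v (Y ε) (ss ε) - ‖X ε - Y ε - ζ ε‖ ^ 2 / (2 * ε)
          - |tt ε - ss ε| ^ 2 / (2 * ε) - μ / (T - tt ε) := by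
    intro ε hε
    have hεpos : 0 < ε := hε.1
    have h := hmax ε hε x0 x0 0 h0T 0 h0T
    have hζ2 : ‖ζ ε‖ ^ 2 ≤ m₀ * ε := by
      have h1 := hζ ε hε
      calc ‖ζ ε‖ ^ 2 ≤ Real.sqrt (m₀ * ε) ^ 2 := by
            exact pow_le_pow_left₀ (norm_nonneg _) h1 2
        _ = m₀ * ε := Real.sq_sqrt (by positivity)
    have hζdiv : ‖ζ ε‖ ^ 2 / (2 * ε) ≤ m₀ / 2 := by
      rw [div_le_div_iff₀ (by linarith) (by norm_num)]
      nlinarith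
    have hx0a : u x0 0 = a := hua x0 0 h0T (le_of_eq hx0R.symm)
    have hx0b : v x0 0 = b := hvb x0 0 h0T (le_of_eq hx0R.symm)
    have hnz : x0 - x0 - ζ ε = -ζ ε := by abel
    rw [hnz, norm_neg, hx0a, hx0b] at h
    simp only [sub_zero, abs_zero] at h
    rw [zero_pow (by norm_num), zero_div] at h
    have : L ≤ a - b - ‖ζ ε‖ ^ 2 / (2 * ε) - 0 - μ / T := by
      rw [hL]; linarith
    linarith
  set D : ℝ := max (Cu + Cv - L) 1 with hD
  have hDle : Cu + Cv - L ≤ D := le_max_left _ _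
  clear_value D
  have hDpos : (0:ℝ) < D := by rw [hD]; exact lt_of_lt_of_le one_pos (le_max_right _ _)
  have hbounds : ∀ ε ∈ Ioo (0:ℝ) ε₀,
      ‖X ε - Y ε - ζ ε‖ ^ 2 ≤ 2 * D * ε ∧ |tt ε - ss ε| ^ 2 ≤ 2 * D * ε ∧
        μ / (T - tt ε) ≤ D := by
    intro ε hε
    have hεpos : 0 < ε := hε.1
    obtain ⟨htt, hss⟩ := hmem ε hε
    have hKe := hKey ε hε
    have hu1 : u (X ε) (tt ε) ≤ Cu := (abs_le.mp (hCu _ _ htt)).2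
    have hv1 : -Cv ≤ v (Y ε) (ss ε) := (abs_le.mp (hCv _ _ hss)).1
    have h2ε : (0:ℝ) < 2 * ε := by linarith
    have hPdiv : 0 ≤ ‖X ε - Y ε - ζ ε‖ ^ 2 / (2 * ε) := by positivity
    have hQdiv : 0 ≤ |tt ε - ss ε| ^ 2 / (2 * ε) := by positivity
    have hμt : 0 < μ / (T - tt ε) := div_pos hμ (by linarith [htt.2])
    refine ⟨?_, ?_, by linarith⟩
    · have : ‖X ε - Y ε - ζ ε‖ ^ 2 / (2 * ε) ≤ D := by linarith
      have := (div_le_iff₀ h2ε).mp this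
      linarith [this]
    · have : |tt ε - ss ε| ^ 2 / (2 * ε) ≤ D := by linarith
      have := (div_le_iff₀ h2ε).mp this
      linarith [this]
  set M : ℝ := 2 * D with hM
  clear_value M
  have hMpos : 0 < M := by rw [hM]; positivity
  have hpart1 : ∀ ε ∈ Ioo (0:ℝ) ε₀,
      ‖X ε - Y ε - ζ ε‖ ≤ Real.sqrt (M * ε) ∧ |tt ε - ss ε| ≤ Real.sqrt (M * ε) := by
    intro ε hε
    obtain ⟨h1, h2, _⟩ := hbounds ε hε
    constructor
    · have := Real.sqrt_le_sqrt (by linarith : ‖X ε - Y ε - ζ ε‖ ^ 2 ≤ M * ε)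
      rwa [Real.sqrt_sq (norm_nonneg _)] at this
    · have := Real.sqrt_le_sqrt (by linarith : |tt ε - ss ε| ^ 2 ≤ M * ε)
      rwa [Real.sqrt_sq (abs_nonneg _)] at this
  set τ : ℝ := μ / D with hτdef
  clear_value τ
  have hτpos : 0 < τ := by rw [hτdef]; exact div_pos hμ hDpos
  have hτ : ∀ ε ∈ Ioo (0:ℝ) ε₀, τ ≤ T - tt ε := by
    intro ε hε
    obtain ⟨htt, _⟩ := hmem ε hε
    have hTt : 0 < T - tt ε := by linarith [htt.2]
    have := (hbounds ε hε).2.2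
    rw [hτdef, div_le_iff₀ hDpos]
    have := (div_le_iff₀ hTt).mp this
    nlinarith
  set T' : ℝ := T - τ / 2 with hT'
  clear_value T'
  have hT'T : T' < T := by rw [hT']; linarith
  -- uniform continuity modulus of v on the strip
  have hUC : ∀ δ > (0:ℝ), ∃ θ > (0:ℝ), ∀ (x y : E n) (t s : ℝ),
      t ∈ Icc (0:ℝ) T' → s ∈ Icc (0:ℝ) T' → ‖x - y‖ < θ → |t - s| < θ →
      |v x t - v y s| < δ := by
    intro δ hδ
    have hKcpt : IsCompact (Metric.closedBall (0:E n) (R+1) ×ˢ Icc (0:ℝ) T') :=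
      (isCompact_closedBall _ _).prod isCompact_Icc
    have hsub : Metric.closedBall (0:E n) (R+1) ×ˢ Icc (0:ℝ) T' ⊆ univ ×ˢ Ico 0 T := by
      rintro ⟨p1, p2⟩ ⟨_, h2⟩
      exact ⟨trivial, h2.1, lt_of_le_of_lt h2.2 hT'T⟩
    have hUCK := hKcpt.uniformContinuousOn_of_continuous (hv_cont.mono hsub)
    rw [Metric.uniformContinuousOn_iff] at hUCK
    obtain ⟨θ, hθpos, hθ⟩ := hUCK δ hδ
    refine ⟨min θ 1, by positivity, ?_⟩
    intro x y t s ht hs hxy hts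
    have hxy1 : ‖x - y‖ < 1 := lt_of_lt_of_le hxy (min_le_right _ _)
    have htIco : t ∈ Ico (0:ℝ) T := ⟨ht.1, lt_of_le_of_lt ht.2 hT'T⟩
    have hsIco : s ∈ Ico (0:ℝ) T := ⟨hs.1, lt_of_le_of_lt hs.2 hT'T⟩
    by_cases hx : ‖x‖ ≤ R + 1
    · by_cases hy : ‖y‖ ≤ R + 1
      · have hmem1 : (x, t) ∈ Metric.closedBall (0:E n) (R+1) ×ˢ Icc (0:ℝ) T' := by
          refine ⟨?_, ht⟩
          simpa [Metric.mem_closedBall, dist_zero_right] using hx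
        have hmem2 : (y, s) ∈ Metric.closedBall (0:E n) (R+1) ×ˢ Icc (0:ℝ) T' := by
          refine ⟨?_, hs⟩
          simpa [Metric.mem_closedBall, dist_zero_right] using hy
        have hdist : dist ((x, t) : E n × ℝ) (y, s) < θ := by
          rw [Prod.dist_eq]
          apply max_lt
          · rw [dist_eq_norm]; exact lt_of_lt_of_le hxy (min_le_left _ _)
          · rw [Real.dist_eq]; exact lt_of_lt_of_le hts (min_le_left _ _)
        have := hθ (x, t) hmem1 (y, s) hmem2 hdist
        rwa [Real.dist_eq] at this
      · push_neg at hy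
        have hxR : R ≤ ‖x‖ := by
          have := norm_sub_norm_le y x
          rw [norm_sub_rev] at this
          linarith
        have hyR : R ≤ ‖y‖ := by linarith
        rw [hvb x t htIco hxR, hvb y s hsIco hyR]
        simpa using hδ
    · push_neg at hx
      have hyR : R ≤ ‖y‖ := by
        have := norm_sub_norm_le x y
        linarith
      have hxR : R ≤ ‖x‖ := by linarith
      rw [hvb x t htIco hxR, hvb y s hsIco hyR]
      simpa using hδ
  constructor
  · exact ⟨M, hpart1⟩
  · rw [Metric.tendsto_nhdsWithin_nhds]
    intro δ hδ
    obtain ⟨θ, hθpos, hθ⟩ := hUC (δ/2) (by linarith)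
    refine ⟨min (min ε₀ (τ^2/(4*M))) (θ^2/M), by positivity, ?_⟩
    intro ε hεmem hdist
    have hεpos : 0 < ε := hεmem
    rw [Real.dist_eq, sub_zero, abs_of_pos hεpos] at hdist
    have hε1 : ε < ε₀ := lt_of_lt_of_le hdist ((min_le_left _ _).trans (min_le_left _ _))
    have hε2 : ε < τ^2/(4*M) := lt_of_lt_of_le hdist ((min_le_left _ _).trans (min_le_right _ _))
    have hε3 : ε < θ^2/M := lt_of_lt_of_le hdist (min_le_right _ _)
    have hεIoo : ε ∈ Ioo (0:ℝ) ε₀ := ⟨hεpos, hε1⟩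
    obtain ⟨htt, hss⟩ := hmem ε hεIoo
    obtain ⟨hp, hq⟩ := hpart1 ε hεIoo
    have hsqθ : Real.sqrt (M * ε) < θ := by
      have : M * ε < θ ^ 2 := by
        have h1 := (lt_div_iff₀ hMpos).mp hε3
        have h2 : ε * M = M * ε := by ring
        linarith
      calc Real.sqrt (M * ε) < Real.sqrt (θ ^ 2) := Real.sqrt_lt_sqrt (by positivity) this
        _ = θ := Real.sqrt_sq hθpos.le
    have hsqτ : Real.sqrt (M * ε) ≤ τ / 2 := by
      have h4M : (0:ℝ) < 4 * M := by linarith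
      have : M * ε ≤ (τ/2) ^ 2 := by
        have h1 := (lt_div_iff₀ h4M).mp hε2
        have h2 : ε * (4 * M) = 4 * (M * ε) := by ring
        have h3 : (τ/2) ^ 2 = τ ^ 2 / 4 := by ring
        linarith
      calc Real.sqrt (M * ε) ≤ Real.sqrt ((τ/2) ^ 2) := Real.sqrt_le_sqrt this
        _ = τ / 2 := Real.sqrt_sq (by linarith)
    have httT' : tt ε ∈ Icc (0:ℝ) T' := by
      refine ⟨htt.1, ?_⟩
      have := hτ ε hεIoo
      rw [hT']; linarith
    have hssT' : ss ε ∈ Icc (0:ℝ) T' := by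
      refine ⟨hss.1, ?_⟩
      have h1 := hτ ε hεIoo
      have h2 : ss ε - tt ε ≤ |tt ε - ss ε| := by
        rw [abs_sub_comm]; exact le_abs_self _
      rw [hT']; linarith
    -- plug the test point (X ε, tt ε, X ε - ζ ε, tt ε)
    have h2 := hmax ε hεIoo (X ε) (X ε - ζ ε) (tt ε) htt (tt ε) htt
    have hz : X ε - (X ε - ζ ε) - ζ ε = 0 := by abel
    rw [hz, norm_zero, sub_self, abs_zero] at h2
    rw [zero_pow (by norm_num), zero_div] at h2
    have heq : X ε - ζ ε - Y ε = X ε - Y ε - ζ ε := by abel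
    have hvdiff : |v (X ε - ζ ε) (tt ε) - v (Y ε) (ss ε)| < δ / 2 := by
      apply hθ (X ε - ζ ε) (Y ε) (tt ε) (ss ε) httT' hssT'
      · rw [heq]; exact lt_of_le_of_lt hp hsqθ
      · exact lt_of_le_of_lt hq hsqθ
    have hvd : v (X ε - ζ ε) (tt ε) - v (Y ε) (ss ε) < δ / 2 :=
      lt_of_le_of_lt (le_abs_self _) hvdiff
    have hQdiv : 0 ≤ |tt ε - ss ε| ^ 2 / (2 * ε) := by positivity
    have hPle : ‖X ε - Y ε - ζ ε‖ ^ 2 / (2 * ε) < δ / 2 := by linarith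
    have hPε : ‖X ε - Y ε - ζ ε‖ ^ 2 / ε = 2 * (‖X ε - Y ε - ζ ε‖ ^ 2 / (2 * ε)) := by
      field_simp
    rw [Real.dist_eq, sub_zero, abs_of_nonneg (by positivity), hPε]
    linarith


end Paper
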